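/- For every k ≥ 0, the power sum L_1^k + L_2^k + ... + L_r^k of the Jucys-Murphy elements lies in the center of the group algebra ℂ[S_r]. -/

import Mathlib

/-- The Jucys-Murphy element `L_k = ∑_{j<k} (j,k)` of the group algebra `ℂ[S_r]`. -/
noncomputable def JM (r : ℕ) (k : Fin r) : MonoidAlgebra ℂ (Equiv.Perm (Fin r)) :=
  ∑ j ∈ Finset.univ.filter (fun j => j < k),
    MonoidAlgebra.of ℂ (Equiv.Perm (Fin r)) (Equiv.swap j k)

open Equiv Finset MonoidAlgebra

/-- If `σ` fixes `c` and preserves `{m : m < c}`, then `of σ` commutes with `JM r c`. -/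
lemma of_commute_JM {r : ℕ} (σ : Equiv.Perm (Fin r)) (c : Fin r) (hc : σ c = c)
    (h : ∀ m, σ m < c ↔ m < c) :
    Commute (MonoidAlgebra.of ℂ (Equiv.Perm (Fin r)) σ) (JM r c) := by
  show _ * _ = _ * _
  rw [JM, Finset.mul_sum, Finset.sum_mul]
  have key : ∀ m : Fin r, σ * Equiv.swap m c = Equiv.swap (σ m) c * σ := by
    intro m
    rw [Equiv.mul_swap_eq_swap_mul, hc]
  simp only [← map_mul, key]
  refine Finset.sum_nbij' (fun m => σ m) (fun m => σ⁻¹ m) ?_ ?_ ?_ ?_ ?_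
  · intro a ha
    simp only [Finset.mem_filter, Finset.mem_univ, true_and] at ha ⊢
    exact (h a).mpr ha
  · intro a ha
    simp only [Finset.mem_filter, Finset.mem_univ, true_and] at ha ⊢
    have := h (σ⁻¹ a)
    rw [show σ (σ⁻¹ a) = a from σ.apply_symm_apply a] at this
    exact this.mp ha
  · intro a _; exact σ.symm_apply_apply a
  · intro a _; exact σ.apply_symm_apply a
  · intro a _; rfl

section KeyG

variable {A : Type*} [Ring A] {a b s ε : A}

lemma keyG1 (hea : Commute ε a) (h1 : s * b = a * s + ε) :
    ∀ k : ℕ, s * b ^ k = a ^ k * s + ε * ∑ m ∈ Finset.range k, a ^ m * b ^ (k - 1 - m) := by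
  intro k
  induction k with
  | zero => simp
  | succ k ih =>
    have hP : ∑ m ∈ Finset.range (k + 1), a ^ m * b ^ (k - m)
        = a ^ k + (∑ m ∈ Finset.range k, a ^ m * b ^ (k - 1 - m)) * b := by
      rw [Finset.sum_range_succ, Nat.sub_self, pow_zero, mul_one, Finset.sum_mul]
      rw [add_comm]
      congr 1
      refine Finset.sum_congr rfl fun m hm => ?_
      rw [Finset.mem_range] at hm
      rw [mul_assoc, ← pow_succ]
      congr 2
      omega
    have harith : ∀ m ∈ Finset.range (k+1), a ^ m * b ^ (k + 1 - 1 - m) = a ^ m * b ^ (k - m) := by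
      intro m hm; congr 2
    calc s * b ^ (k + 1) = (s * b ^ k) * b := by rw [pow_succ, mul_assoc]
      _ = (a ^ k * s + ε * ∑ m ∈ Finset.range k, a ^ m * b ^ (k - 1 - m)) * b := by rw [ih]
      _ = a ^ k * (s * b) + ε * ((∑ m ∈ Finset.range k, a ^ m * b ^ (k - 1 - m)) * b) := by
          noncomm_ring
      _ = a ^ k * (a * s + ε) + ε * ((∑ m ∈ Finset.range k, a ^ m * b ^ (k - 1 - m)) * b) := by
          rw [h1]
      _ = a ^ (k + 1) * s + (a ^ k * ε + ε * ((∑ m ∈ Finset.range k, a ^ m * b ^ (k - 1 - m)) * b)) := by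
          noncomm_ring
      _ = a ^ (k + 1) * s + ε * (a ^ k + (∑ m ∈ Finset.range k, a ^ m * b ^ (k - 1 - m)) * b) := by
          rw [mul_add, (hea.pow_right k).eq]
      _ = a ^ (k + 1) * s + ε * ∑ m ∈ Finset.range (k + 1), a ^ m * b ^ (k + 1 - 1 - m) := by
          rw [Finset.sum_congr rfl harith, hP]

lemma keyG2 (hab : Commute a b) (heb : Commute ε b) (h2 : b * s = s * a + ε) :
    ∀ k : ℕ, b ^ k * s = s * a ^ k + ε * ∑ m ∈ Finset.range k, a ^ m * b ^ (k - 1 - m) := by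
  intro k
  induction k with
  | zero => simp
  | succ k ih =>
    have hP : ∑ m ∈ Finset.range (k + 1), a ^ m * b ^ (k - m)
        = a ^ k + b * ∑ m ∈ Finset.range k, a ^ m * b ^ (k - 1 - m) := by
      rw [Finset.sum_range_succ, Nat.sub_self, pow_zero, mul_one, Finset.mul_sum]
      rw [add_comm]
      congr 1
      refine Finset.sum_congr rfl fun m hm => ?_
      rw [Finset.mem_range] at hm
      rw [← mul_assoc, ← (hab.pow_left m).eq, mul_assoc, ← pow_succ']
      congr 2
      omega
    have harith : ∀ m ∈ Finset.range (k+1), a ^ m * b ^ (k + 1 - 1 - m) = a ^ m * b ^ (k - m) := by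
      intro m hm; congr 2
    calc b ^ (k + 1) * s = b * (b ^ k * s) := by rw [pow_succ', mul_assoc]
      _ = b * (s * a ^ k + ε * ∑ m ∈ Finset.range k, a ^ m * b ^ (k - 1 - m)) := by rw [ih]
      _ = (b * s) * a ^ k + (b * ε) * ∑ m ∈ Finset.range k, a ^ m * b ^ (k - 1 - m) := by
          noncomm_ring
      _ = (s * a + ε) * a ^ k + (ε * b) * ∑ m ∈ Finset.range k, a ^ m * b ^ (k - 1 - m) := by
          rw [h2, heb.eq]
      _ = s * a ^ (k + 1) + (ε * a ^ k + ε * (b * ∑ m ∈ Finset.range k, a ^ m * b ^ (k - 1 - m))) := by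
          rw [pow_succ']; noncomm_ring
      _ = s * a ^ (k + 1) + ε * (a ^ k + b * ∑ m ∈ Finset.range k, a ^ m * b ^ (k - 1 - m)) := by
          rw [mul_add]
      _ = s * a ^ (k + 1) + ε * ∑ m ∈ Finset.range (k + 1), a ^ m * b ^ (k + 1 - 1 - m) := by
          rw [Finset.sum_congr rfl harith, hP]

lemma keyG (hab : Commute a b) (hea : Commute ε a) (heb : Commute ε b)
    (h1 : s * b = a * s + ε) (h2 : b * s = s * a + ε) (k : ℕ) :
    s * (a ^ k + b ^ k) = (a ^ k + b ^ k) * s := by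
  have h1' : s * a = b * s + -ε := by rw [← sub_eq_add_neg, eq_sub_iff_add_eq, h2]
  have h2' : a * s = s * b + -ε := by rw [← sub_eq_add_neg, eq_sub_iff_add_eq, h1]
  have hPP : ∑ m ∈ Finset.range k, b ^ m * a ^ (k - 1 - m)
      = ∑ m ∈ Finset.range k, a ^ m * b ^ (k - 1 - m) := by
    rw [← Finset.sum_range_reflect]
    refine Finset.sum_congr rfl fun m hm => ?_
    rw [Finset.mem_range] at hm
    have : k - 1 - (k - 1 - m) = m := by omega
    rw [this, (hab.pow_pow m (k - 1 - m)).eq]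
  have e1 := keyG1 hea h1 k
  have e2 := keyG2 hab heb h2 k
  have e1' := keyG1 (ε := -ε) (a := b) (b := a) (heb.neg_left) h1' k
  have e2' := keyG2 (ε := -ε) (a := b) (b := a) hab.symm (hea.neg_left) h2' k
  rw [hPP] at e1' e2'
  rw [mul_add, add_mul, e1, e1', e2, e2']
  noncomm_ring

end KeyG

lemma mem_center_of_commute_of {G : Type*} [Group G] (x : MonoidAlgebra ℂ G)
    (h : ∀ g : G, Commute (MonoidAlgebra.of ℂ G g) x) :
    x ∈ Subalgebra.center ℂ (MonoidAlgebra ℂ G) := by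
  rw [Subalgebra.mem_center_iff]
  intro b
  refine MonoidAlgebra.induction_on (motive := fun y => y * x = x * y) b (fun g => h g) (fun f g hf hg => ?_) (fun c f hf => ?_)
  · beta_reduce at hf hg ⊢
    rw [add_mul, mul_add, hf, hg]
  · beta_reduce at hf ⊢
    rw [smul_mul_assoc, mul_smul_comm, hf]

section Adjacent

variable {n : ℕ} (i : Fin n)

private lemma hfilter :
    Finset.univ.filter (fun j : Fin (n+1) => j < i.succ)
      = insert i.castSucc (Finset.univ.filter (fun j => j < i.castSucc)) := by
  ext j
  simp only [Finset.mem_filter, Finset.mem_univ, true_and, Finset.mem_insert, Fin.lt_def,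
    Fin.ext_iff, Fin.val_succ, Fin.coe_castSucc]
  omega

private lemma JMsplit :
    JM (n+1) i.succ = (∑ j ∈ Finset.univ.filter (fun j : Fin (n+1) => j < i.castSucc),
        MonoidAlgebra.of ℂ (Equiv.Perm (Fin (n+1))) (Equiv.swap j i.succ))
      + MonoidAlgebra.of ℂ (Equiv.Perm (Fin (n+1))) (Equiv.swap i.castSucc i.succ) := by
  rw [JM, hfilter, Finset.sum_insert (by simp)]
  exact add_comm _ _

private lemma swap_fix {j : Fin (n+1)} (hj : j < i.castSucc) :
    Equiv.swap i.castSucc i.succ j = j :=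
  Equiv.swap_apply_of_ne_of_ne (ne_of_lt hj) (ne_of_lt (hj.trans (Fin.castSucc_lt_succ (i := i))))

private lemma rel1 :
    MonoidAlgebra.of ℂ (Equiv.Perm (Fin (n+1))) (Equiv.swap i.castSucc i.succ) * JM (n+1) i.succ
      = JM (n+1) i.castSucc
        * MonoidAlgebra.of ℂ (Equiv.Perm (Fin (n+1))) (Equiv.swap i.castSucc i.succ) + 1 := by
  rw [JMsplit, mul_add, ← map_mul, Equiv.swap_mul_self, map_one]
  congr 1
  rw [JM, Finset.mul_sum, Finset.sum_mul]
  refine Finset.sum_congr rfl fun j hj => ?_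
  have hj' : j < i.castSucc := by simpa using hj
  rw [← map_mul, ← map_mul, Equiv.mul_swap_eq_swap_mul, swap_fix i hj',
    Equiv.swap_apply_right]

private lemma rel2 :
    JM (n+1) i.succ * MonoidAlgebra.of ℂ (Equiv.Perm (Fin (n+1))) (Equiv.swap i.castSucc i.succ)
      = MonoidAlgebra.of ℂ (Equiv.Perm (Fin (n+1))) (Equiv.swap i.castSucc i.succ)
        * JM (n+1) i.castSucc + 1 := by
  rw [JMsplit, add_mul, ← map_mul, Equiv.swap_mul_self, map_one]
  congr 1
  rw [JM, Finset.mul_sum, Finset.sum_mul]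
  refine Finset.sum_congr rfl fun j hj => ?_
  have hj' : j < i.castSucc := by simpa using hj
  rw [← map_mul, ← map_mul, Equiv.swap_mul_eq_mul_swap, Equiv.swap_inv, swap_fix i hj',
    Equiv.swap_apply_right]

private lemma JMcomm : Commute (JM (n+1) i.castSucc) (JM (n+1) i.succ) := by
  have hsum : JM (n+1) i.castSucc = ∑ m ∈ Finset.univ.filter (fun j : Fin (n+1) => j < i.castSucc),
      MonoidAlgebra.of ℂ (Equiv.Perm (Fin (n+1))) (Equiv.swap m i.castSucc) := rfl
  rw [hsum]
  refine Commute.sum_left _ _ _ fun m hm => ?_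
  have hm' : m < i.castSucc := by simpa using hm
  have hcc' : i.castSucc < i.succ := Fin.castSucc_lt_succ (i := i)
  refine of_commute_JM _ _ ?_ ?_
  · exact Equiv.swap_apply_of_ne_of_ne (ne_of_gt (hm'.trans hcc')) (ne_of_gt hcc')
  · intro j
    rcases eq_or_ne j m with rfl | hjm
    · rw [Equiv.swap_apply_left]
      exact iff_of_true hcc' (hm'.trans hcc')
    rcases eq_or_ne j i.castSucc with rfl | hjc
    · rw [Equiv.swap_apply_right]
      exact iff_of_true (hm'.trans hcc') hcc'
    · rw [Equiv.swap_apply_of_ne_of_ne hjm hjc]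

end Adjacent

/-- For every `k ≥ 0`, the power sum `L_1^k + ⋯ + L_r^k` of the Jucys-Murphy elements lies
in the center of the group algebra `ℂ[S_r]`. -/
theorem powerSum_jucysMurphy_mem_center (r k : ℕ) :
    (∑ j : Fin r, JM r j ^ k) ∈
      Subalgebra.center ℂ (MonoidAlgebra ℂ (Equiv.Perm (Fin r))) := by
  apply mem_center_of_commute_of
  intro g
  cases r with
  | zero =>
    have hg : g = 1 := Subsingleton.elim _ _
    rw [hg, map_one]
    exact Commute.one_left _
  | succ n =>
    have hg : g ∈ Submonoid.closure
        (Set.range fun i : Fin n => Equiv.swap i.castSucc i.succ) := by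
      rw [Equiv.Perm.mclosure_swap_castSucc_succ]; trivial
    induction hg using Submonoid.closure_induction with
    | mem x hx =>
      obtain ⟨i, rfl⟩ := hx
      have hcc' : i.castSucc < i.succ := Fin.castSucc_lt_succ (i := i)
      rw [← Finset.sum_sdiff (Finset.subset_univ {i.castSucc, i.succ})]
      apply Commute.add_right
      · refine Commute.sum_right _ _ _ fun j hj => ?_
        simp only [Finset.mem_sdiff, Finset.mem_univ, true_and, Finset.mem_insert,
          Finset.mem_singleton, not_or] at hj
        obtain ⟨hjc, hjc'⟩ := hj
        have hvc : (j : ℕ) ≠ (i : ℕ) := by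
          simpa [Fin.ext_iff, Fin.coe_castSucc] using hjc
        have hvc' : (j : ℕ) ≠ (i : ℕ) + 1 := by
          simpa [Fin.ext_iff, Fin.val_succ] using hjc'
        refine (of_commute_JM _ _ ?_ ?_).pow_right k
        · exact Equiv.swap_apply_of_ne_of_ne hjc hjc'
        · intro m
          rcases eq_or_ne m i.castSucc with rfl | hmc
          · rw [Equiv.swap_apply_left]
            simp only [Fin.lt_def, Fin.val_succ, Fin.coe_castSucc]
            omega
          rcases eq_or_ne m i.succ with rfl | hmc'
          · rw [Equiv.swap_apply_right]
            simp only [Fin.lt_def, Fin.val_succ, Fin.coe_castSucc]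
            omega
          · rw [Equiv.swap_apply_of_ne_of_ne hmc hmc']
      · rw [Finset.sum_pair (ne_of_lt hcc')]
        show _ * _ = _ * _
        exact keyG (JMcomm i) (Commute.one_left _) (Commute.one_left _) (rel1 i) (rel2 i) k
    | one => rw [map_one]; exact Commute.one_left _
    | mul x y _ _ hx hy => rw [map_mul]; exact hx.mul_left hy
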